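/- For all real t ≥ 0 and x ≥ 0, the total variation distance between Poisson distributions satisfies TV(Poisson(t), Poisson(t+x)) ≤ min(1 − e^{-x}, √(2/e)·(√(t+x) − √t)). -/

import Mathlib

open Real

namespace AL

/-- Poisson pmf as a function of real rate `s`. -/
noncomputable def p (s : ℝ) (k : ℕ) : ℝ := Real.exp (-s) * s ^ k / (k.factorial : ℝ)

/-- The derivative of `p · k` at `s`. -/
noncomputable def d (s : ℝ) : ℕ → ℝ
  | 0 => -p s 0
  | (k+1) => p s k - p s (k+1)

lemma p_nonneg {s : ℝ} (hs : 0 ≤ s) (k : ℕ) : 0 ≤ p s k := by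
  unfold p; positivity

lemma p_pos {s : ℝ} (hs : 0 < s) (k : ℕ) : 0 < p s k := by
  unfold p; positivity

lemma hasSum_p {s : ℝ} (hs : 0 ≤ s) : HasSum (p s) 1 := by
  have := ProbabilityTheory.poissonPMFRealSum ⟨s, hs⟩
  exact this

lemma p_succ (s : ℝ) (k : ℕ) : p s (k+1) = p s k * (s / (k+1)) := by
  unfold p
  rw [Nat.factorial_succ]
  push_cast
  field_simp
  ring

lemma hasDerivAt_p (s : ℝ) (k : ℕ) : HasDerivAt (fun u => p u k) (d s k) s := by
  have he : HasDerivAt (fun u : ℝ => Real.exp (-u)) (-Real.exp (-s)) s := by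
    exact ((Real.hasDerivAt_exp (-s)).comp s (hasDerivAt_neg s)).congr_deriv (by ring)
  have hp : HasDerivAt (fun u : ℝ => u ^ k) (k * s ^ (k-1)) s := hasDerivAt_pow k s
  have h := (he.mul hp).div_const (k.factorial : ℝ)
  convert (show HasDerivAt (fun u => p u k) _ s from h) using 1
  cases k with
  | zero => simp [d, p]
  | succ n =>
    show p s n - p s (n+1) = _
    unfold p
    rw [Nat.factorial_succ, Nat.succ_sub_one]
    push_cast
    have h1 : (n.factorial : ℝ) ≠ 0 := Nat.cast_ne_zero.mpr n.factorial_ne_zero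
    field_simp
    ring

/-- monotone below the mean -/
lemma p_mono {s : ℝ} (hs : 0 < s) {i j : ℕ} (hij : i ≤ j) (hj : (j : ℝ) ≤ s) :
    p s i ≤ p s j := by
  induction j with
  | zero => simp_all
  | succ n ih =>
    rcases Nat.lt_or_ge i (n+1) with h | h
    · have h1 : p s i ≤ p s n := ih (Nat.lt_succ_iff.mp h) (by push_cast at hj ⊢; linarith)
      have h2 : p s n ≤ p s (n+1) := by
        rw [p_succ]
        nth_rewrite 1 [← mul_one (p s n)]
        apply mul_le_mul_of_nonneg_left _ (p_nonneg hs.le n)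
        rw [le_div_iff₀ (by positivity)]
        push_cast at hj ⊢; linarith
      linarith
    · have : i = n+1 := le_antisymm hij h
      simp [this]

/-- partial sums of |d| are bounded by twice the mode mass -/
lemma p_succ_le {s : ℝ} (hs : 0 < s) {k : ℕ} (h : s ≤ k + 1) : p s (k+1) ≤ p s k := by
  rw [p_succ]
  nth_rewrite 2 [← mul_one (p s k)]
  apply mul_le_mul_of_nonneg_left _ (p_nonneg hs.le k)
  rw [div_le_one (by positivity)]
  exact h

lemma invariant {s : ℝ} (hs : 0 < s) (n : ℕ) :
    ∑ k ∈ Finset.range (n+1), |d s k| + p s n ≤ 2 * p s (min n (Nat.floor s)) := by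
  induction n with
  | zero =>
    have h0 : |d s 0| = p s 0 := by
      show |(-p s 0)| = p s 0
      rw [abs_neg, abs_of_nonneg (p_nonneg hs.le 0)]
    simp [h0]
    linarith [p_nonneg hs.le 0]
  | succ n ih =>
    rw [Finset.sum_range_succ]
    have hd : d s (n+1) = p s n - p s (n+1) := rfl
    rcases le_or_gt ((n:ℝ)+1) s with h | h
    · have hf1 : n + 1 ≤ Nat.floor s := Nat.le_floor (by push_cast; linarith)
      have hmin1 : min n (Nat.floor s) = n := min_eq_left (by omega)
      have hmin2 : min (n+1) (Nat.floor s) = n+1 := min_eq_left hf1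
      have hmono : p s n ≤ p s (n+1) := p_mono hs (Nat.le_succ n) (by push_cast; linarith)
      have habs : |d s (n+1)| = p s (n+1) - p s n := by
        rw [hd, abs_of_nonpos (by linarith), neg_sub]
      rw [hmin2, habs]
      rw [hmin1] at ih
      linarith
    · have hf1 : Nat.floor s ≤ n := by
        have := (Nat.floor_lt hs.le).mpr (show s < ((n+1:ℕ):ℝ) by push_cast; linarith)
        omega
      have hmin1 : min n (Nat.floor s) = Nat.floor s := min_eq_right hf1
      have hmin2 : min (n+1) (Nat.floor s) = Nat.floor s := min_eq_right (by omega)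
      have hmono : p s (n+1) ≤ p s n := p_succ_le hs (by push_cast; linarith)
      have habs : |d s (n+1)| = p s n - p s (n+1) := by
        rw [hd, abs_of_nonneg (by linarith)]
      rw [hmin2, habs]
      rw [hmin1] at ih
      linarith

/-- partial sums of |d| are bounded by twice the mode mass -/
lemma sum_abs_d_le {s : ℝ} (hs : 0 < s) (n : ℕ) :
    ∑ k ∈ Finset.range n, |d s k| ≤ 2 * p s (Nat.floor s) := by
  cases n with
  | zero =>
    simp only [Finset.range_zero, Finset.sum_empty]
    linarith [p_nonneg hs.le (Nat.floor s)]
  | succ n =>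
    have h1 := invariant hs n
    have h2 : p s (min n (Nat.floor s)) ≤ p s (Nat.floor s) :=
      p_mono hs (min_le_right _ _) (Nat.floor_le hs.le)
    have h3 : 0 ≤ p s n := p_nonneg hs.le n
    linarith

lemma log_le_cubic {x : ℝ} (hx : 0 ≤ x) : Real.log (1+x) ≤ x - x^2/2 + x^3/3 := by
  set F : ℝ → ℝ := fun t => t - t^2/2 + t^3/3 - Real.log (1+t) with hF
  have hder : ∀ t : ℝ, 0 ≤ t → HasDerivAt F (t^3/(1+t)) t := by
    intro t ht
    have h1 : (0:ℝ) < 1 + t := by linarith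
    have hlog : HasDerivAt (fun u : ℝ => Real.log (1+u)) (1/(1+t)) t := by
      exact ((Real.hasDerivAt_log h1.ne').comp t ((hasDerivAt_id t).const_add 1)).congr_deriv (by simp)
    have hpoly : HasDerivAt (fun u : ℝ => u - u^2/2 + u^3/3) (1 - t + t^2) t := by
      have h2 := ((hasDerivAt_id t).sub ((hasDerivAt_pow 2 t).div_const 2)).add
        ((hasDerivAt_pow 3 t).div_const 3)
      convert (show HasDerivAt (fun u : ℝ => u - u^2/2 + u^3/3) _ t from h2) using 1
      push_cast; ring
    have h3 := hpoly.sub hlog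
    convert (show HasDerivAt F _ t from h3) using 1
    field_simp
    ring
  have key : MonotoneOn F (Set.Ici (0:ℝ)) := by
    apply monotoneOn_of_deriv_nonneg (convex_Ici 0)
    · intro t ht
      exact (hder t ht).continuousAt.continuousWithinAt
    · intro t ht
      rw [interior_Ici] at ht
      exact (hder t (le_of_lt ht)).differentiableAt.differentiableWithinAt
    · intro t ht
      rw [interior_Ici, Set.mem_Ioi] at ht
      rw [(hder t (le_of_lt ht)).deriv]
      have h5 : (0:ℝ) < 1 + t := by linarith
      positivity
  have h0 := key (Set.self_mem_Ici) (Set.mem_Ici.mpr hx) hx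
  have hF0 : F 0 = 0 := by simp [hF]
  rw [hF0] at h0
  simp only [hF] at h0
  linarith

lemma neg_log_le {y : ℝ} (h0 : 0 ≤ y) (h1 : y ≤ 1/3) :
    -(y + y^2/2 + y^3/2) ≤ Real.log (1-y) := by
  set G : ℝ → ℝ := fun t => t + t^2/2 + t^3/2 + Real.log (1-t) with hG
  have hder : ∀ t : ℝ, t < 1 → HasDerivAt G (t^2*(1-3*t)/(2*(1-t))) t := by
    intro t ht
    have h2 : (0:ℝ) < 1 - t := by linarith
    have hlog : HasDerivAt (fun u : ℝ => Real.log (1-u)) (-(1/(1-t))) t := by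
      have := (Real.hasDerivAt_log h2.ne').comp t ((hasDerivAt_id t).neg.const_add 1)
      convert (show HasDerivAt (fun u : ℝ => Real.log (1-u)) _ t from this) using 1
      field_simp
    have hpoly : HasDerivAt (fun u : ℝ => u + u^2/2 + u^3/2) (1 + t + 3*t^2/2) t := by
      have h3 := ((hasDerivAt_id t).add ((hasDerivAt_pow 2 t).div_const 2)).add
        ((hasDerivAt_pow 3 t).div_const 2)
      convert (show HasDerivAt (fun u : ℝ => u + u^2/2 + u^3/2) _ t from h3) using 1
      push_cast; ring
    have h4 := hpoly.add hlog
    convert (show HasDerivAt G _ t from h4) using 1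
    field_simp
    ring
  have key : MonotoneOn G (Set.Icc (0:ℝ) (1/3)) := by
    apply monotoneOn_of_deriv_nonneg (convex_Icc 0 (1/3))
    · intro t ht
      exact (hder t (by rcases ht with ⟨_, h⟩; linarith)).continuousAt.continuousWithinAt
    · intro t ht
      rw [interior_Icc] at ht
      exact (hder t (by rcases ht with ⟨_, h⟩; linarith)).differentiableAt.differentiableWithinAt
    · intro t ht
      rw [interior_Icc] at ht
      rcases ht with ⟨ha, hb⟩
      rw [(hder t (by linarith)).deriv]
      have : (0:ℝ) < 1 - t := by linarith
      have h13 : 0 ≤ 1 - 3*t := by linarith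
      positivity
  have h0 := key (Set.left_mem_Icc.mpr (by norm_num)) (Set.mem_Icc.mpr ⟨h0, h1⟩) h0
  have hG0 : G 0 = 0 := by simp [hG]
  rw [hG0] at h0
  simp only [hG] at h0
  linarith

set_option maxHeartbeats 1000000 in
lemma key_step_large {u : ℝ} (hm7 : (15:ℝ)/2 ≤ u) :
    (u+1) ^ (u+1) ≤ (u+1/2) * Real.exp 1 * (u ^ u) := by
  have hu0 : (0:ℝ) < u := by linarith
  have hu1 : (0:ℝ) < u + 1 := by linarith
  have hzero : (0:ℝ) < 1 + 1/u := by positivity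
  have hy2 : (0:ℝ) < 1 - 1/(2*(u+1)) := by
    rw [sub_pos, div_lt_one (by positivity)]; linarith
  have key2 : u * Real.log (1+1/u) ≤ 1 + Real.log (1 - 1/(2*(u+1))) := by
    have l1 := log_le_cubic (x := 1/u) (by positivity)
    have hy1 : 1/(2*(u+1)) ≤ 1/3 := by
      rw [div_le_div_iff₀ (by positivity) (by norm_num)]; linarith
    have l2 := neg_log_le (y := 1/(2*(u+1))) (by positivity) hy1
    have e1 : u * Real.log (1+1/u) ≤ 1 - 1/(2*u) + 1/(3*u^2) := by
      calc u * Real.log (1+1/u) ≤ u * (1/u - (1/u)^2/2 + (1/u)^3/3) :=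
            mul_le_mul_of_nonneg_left l1 hu0.le
        _ = 1 - 1/(2*u) + 1/(3*u^2) := by field_simp
    have key3 : (0:ℝ) ≤ 2*u^3 - 9*u^2 - 24*u - 16 := by
      nlinarith [hm7, sq_nonneg (u - 15/2), mul_nonneg (sub_nonneg.mpr hm7) (sq_nonneg (u - 15/2))]
    have heq : 1 - (1/(2*(u+1)) + (1/(2*(u+1)))^2/2 + (1/(2*(u+1)))^3/2)
          - (1 - 1/(2*u) + 1/(3*u^2))
        = (2*u^3 - 9*u^2 - 24*u - 16) / (48*u^2*(u+1)^3) := by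
      field_simp
      ring
    have hdiv : (0:ℝ) ≤ (2*u^3 - 9*u^2 - 24*u - 16) / (48*u^2*(u+1)^3) :=
      div_nonneg key3 (by positivity)
    linarith [l2]
  have hgoal_log : (u+1) * Real.log (u+1) ≤ Real.log (u+1/2) + 1 + u * Real.log u := by
    have l3 : Real.log (u+1) = Real.log u + Real.log (1+1/u) := by
      rw [← Real.log_mul hu0.ne' hzero.ne']
      congr 1
      field_simp
    have l4 : Real.log (u+1/2) = Real.log (u+1) + Real.log (1 - 1/(2*(u+1))) := by
      rw [← Real.log_mul hu1.ne' hy2.ne']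
      congr 1
      field_simp
      ring
    have e5 : (u+1) * Real.log (u+1)
        = Real.log (u+1) + u * Real.log u + u * Real.log (1+1/u) := by
      rw [l3]; ring
    linarith [key2]
  rw [Real.rpow_def_of_pos hu1, Real.rpow_def_of_pos hu0]
  have hprod : (u+1/2) * Real.exp 1 * Real.exp (Real.log u * u)
      = Real.exp (Real.log (u+1/2) + 1 + Real.log u * u) := by
    rw [Real.exp_add, Real.exp_add, Real.exp_log (by linarith : (0:ℝ) < u+1/2)]
  rw [hprod]
  apply Real.exp_le_exp.mpr
  nlinarith [hgoal_log]

lemma key_step (m : ℕ) :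
    ((m:ℝ)+3/2) ^ ((m:ℝ)+3/2) ≤ ((m:ℝ)+1) * Real.exp 1 * (((m:ℝ)+1/2) ^ ((m:ℝ)+1/2)) := by
  have hx : (0:ℝ) < (m:ℝ)+3/2 := by positivity
  have hy : (0:ℝ) < (m:ℝ)+1/2 := by positivity
  rcases le_or_gt m 6 with hm | hm
  · -- explicit rational check after squaring
    have hL : (((m:ℝ)+3/2) ^ ((m:ℝ)+3/2))^2 = ((m:ℝ)+3/2) ^ (2*m+3 : ℕ) := by
      rw [sq, ← Real.rpow_add hx,
        show ((m:ℝ)+3/2)+((m:ℝ)+3/2) = ((2*m+3 : ℕ):ℝ) by push_cast; ring,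
        Real.rpow_natCast]
    have hR : (((m:ℝ)+1/2) ^ ((m:ℝ)+1/2))^2 = ((m:ℝ)+1/2) ^ (2*m+1 : ℕ) := by
      rw [sq, ← Real.rpow_add hy,
        show ((m:ℝ)+1/2)+((m:ℝ)+1/2) = ((2*m+1 : ℕ):ℝ) by push_cast; ring,
        Real.rpow_natCast]
    have hsq : (((m:ℝ)+3/2) ^ ((m:ℝ)+3/2))^2
        ≤ (((m:ℝ)+1) * Real.exp 1 * (((m:ℝ)+1/2) ^ ((m:ℝ)+1/2)))^2 := by
      rw [hL, mul_pow, mul_pow, hR]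
      have he2 : (7.389056098:ℝ) < Real.exp 2 := by
        rw [show (2:ℝ) = 1+1 by norm_num, Real.exp_add]
        nlinarith [Real.exp_one_gt_d9]
      interval_cases m <;> norm_num <;> nlinarith [he2]
    have hA : (0:ℝ) ≤ ((m:ℝ)+3/2) ^ ((m:ℝ)+3/2) := (Real.rpow_pos_of_pos hx _).le
    have hB : (0:ℝ) ≤ ((m:ℝ)+1) * Real.exp 1 * (((m:ℝ)+1/2) ^ ((m:ℝ)+1/2)) := by
      positivity
    nlinarith [hsq, hA, hB]
  · have hm7 : (15:ℝ)/2 ≤ (m:ℝ)+1/2 := by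
      have h7 : (7:ℕ) ≤ m := hm
      have h7' : (7:ℝ) ≤ (m:ℝ) := by exact_mod_cast h7
      linarith
    have h := key_step_large hm7
    rw [show (m:ℝ)+1/2+1 = (m:ℝ)+3/2 by ring, show (m:ℝ)+1/2+1/2 = (m:ℝ)+1 by ring] at h
    exact h

lemma A_le (m : ℕ) :
    Real.exp (-((m:ℝ)+1/2)) * ((m:ℝ)+1/2) ^ ((m:ℝ)+1/2)
      ≤ (m.factorial : ℝ) / Real.sqrt (2 * Real.exp 1) := by
  induction m with
  | zero =>
    have h1 : ((0:ℕ):ℝ)+1/2 = (1:ℝ)/2 := by norm_num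
    rw [h1]
    have h2 : ((1:ℝ)/2) ^ ((1:ℝ)/2) = Real.sqrt (1/2) := (Real.sqrt_eq_rpow _).symm
    rw [h2]
    have h3 : Real.sqrt (2 * Real.exp 1) = Real.sqrt 2 * Real.sqrt (Real.exp 1) :=
      Real.sqrt_mul (by norm_num) _
    have h4 : Real.sqrt (Real.exp 1) = Real.exp (1/2) := by
      rw [← Real.exp_half]
    have h5 : Real.sqrt (1/2) = 1 / Real.sqrt 2 := by
      rw [show (1:ℝ)/2 = 2⁻¹ by norm_num, Real.sqrt_inv]
      simp
    have hs2 : (0:ℝ) < Real.sqrt 2 := Real.sqrt_pos.mpr (by norm_num)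
    rw [h3, h4, h5]
    rw [Nat.factorial_zero]
    rw [show Real.exp (-(1/2 : ℝ)) = (Real.exp (1/2))⁻¹ by rw [← Real.exp_neg]]
    rw [le_div_iff₀ (by positivity)]
    have he : (0:ℝ) < Real.exp (1/2) := Real.exp_pos _
    push_cast
    field_simp
    exact le_rfl
  | succ n ih =>
    have hx : (0:ℝ) < (n:ℝ)+3/2 := by positivity
    have hcast : ((n+1 : ℕ):ℝ)+1/2 = (n:ℝ)+3/2 := by push_cast; ring
    rw [hcast]
    have hstep := key_step n
    have hrw : Real.exp (-((n:ℝ)+3/2)) = Real.exp (-((n:ℝ)+1/2)) * Real.exp (-1) := by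
      rw [← Real.exp_add]; ring_nf
    rw [hrw]
    have hpos1 : (0:ℝ) ≤ Real.exp (-((n:ℝ)+1/2)) * Real.exp (-1) := by positivity
    calc Real.exp (-((n:ℝ)+1/2)) * Real.exp (-1) * ((n:ℝ)+3/2) ^ ((n:ℝ)+3/2)
        ≤ Real.exp (-((n:ℝ)+1/2)) * Real.exp (-1)
            * (((n:ℝ)+1) * Real.exp 1 * (((n:ℝ)+1/2) ^ ((n:ℝ)+1/2))) :=
          mul_le_mul_of_nonneg_left hstep hpos1
      _ = ((n:ℝ)+1) * (Real.exp (-((n:ℝ)+1/2)) * ((n:ℝ)+1/2) ^ ((n:ℝ)+1/2)) := by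
          have hee : Real.exp (-1) * Real.exp 1 = 1 := by
            rw [← Real.exp_add]; norm_num
          linear_combination ((n:ℝ)+1) * Real.exp (-((n:ℝ)+1/2))
            * (((n:ℝ)+1/2) ^ ((n:ℝ)+1/2)) * hee
      _ ≤ ((n:ℝ)+1) * ((n.factorial : ℝ) / Real.sqrt (2 * Real.exp 1)) := by
          apply mul_le_mul_of_nonneg_left ih (by positivity)
      _ = ((n+1).factorial : ℝ) / Real.sqrt (2 * Real.exp 1) := by
          rw [Nat.factorial_succ]
          push_cast
          ring

/-- the mode bound `p s ⌊s⌋ ≤ 1/√(2 e s)` -/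
lemma gibbs {s a : ℝ} (hs : 0 < s) (ha : 0 < a) :
    Real.exp (-s) * s ^ a ≤ Real.exp (-a) * a ^ a := by
  rw [Real.rpow_def_of_pos hs, Real.rpow_def_of_pos ha, ← Real.exp_add, ← Real.exp_add]
  apply Real.exp_le_exp.mpr
  have hlog : Real.log (s/a) ≤ s/a - 1 := Real.log_le_sub_one_of_pos (by positivity)
  rw [Real.log_div hs.ne' ha.ne'] at hlog
  have h6 : a * (Real.log s - Real.log a) ≤ a * (s/a - 1) :=
    mul_le_mul_of_nonneg_left hlog ha.le
  have h7 : a * (s/a - 1) = s - a := by field_simp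
  nlinarith [h6, h7]

lemma mode_bound {s : ℝ} (hs : 0 < s) :
    p s (Nat.floor s) ≤ 1 / Real.sqrt (2 * Real.exp 1 * s) := by
  obtain ⟨m, hm⟩ : ∃ m : ℕ, m = Nat.floor s := ⟨_, rfl⟩
  rw [← hm]
  have ha : (0:ℝ) < (m:ℝ) + 1/2 := by positivity
  have step1 := gibbs hs ha
  have step2 : s ^ ((m:ℝ) + 1/2) = s ^ (m:ℕ) * Real.sqrt s := by
    rw [Real.sqrt_eq_rpow, ← Real.rpow_natCast s m, ← Real.rpow_add hs]
  have hA := A_le m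
  have hfac : (0:ℝ) < (m.factorial : ℝ) := by exact_mod_cast m.factorial_pos
  have hsqrt2e : (0:ℝ) < Real.sqrt (2 * Real.exp 1) := Real.sqrt_pos.mpr (by positivity)
  have hsqrts : (0:ℝ) < Real.sqrt s := Real.sqrt_pos.mpr hs
  have hsqrtprod : Real.sqrt (2 * Real.exp 1 * s)
      = Real.sqrt (2 * Real.exp 1) * Real.sqrt s := Real.sqrt_mul (by positivity) s
  rw [le_div_iff₀ (by rw [hsqrtprod]; positivity)]
  have hrw : p s m * Real.sqrt (2 * Real.exp 1 * s)
      = (Real.exp (-s) * s ^ ((m:ℝ) + 1/2)) * Real.sqrt (2 * Real.exp 1) / (m.factorial : ℝ) := by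
    rw [hsqrtprod, step2]
    unfold p
    field_simp
  rw [hrw]
  have h8 : (Real.exp (-s) * s ^ ((m:ℝ) + 1/2)) * Real.sqrt (2 * Real.exp 1)
      ≤ (Real.exp (-((m:ℝ) + 1/2)) * ((m:ℝ) + 1/2) ^ ((m:ℝ) + 1/2)) * Real.sqrt (2 * Real.exp 1) :=
    mul_le_mul_of_nonneg_right step1 hsqrt2e.le
  have h9 : (Real.exp (-((m:ℝ) + 1/2)) * ((m:ℝ) + 1/2) ^ ((m:ℝ) + 1/2)) * Real.sqrt (2 * Real.exp 1)
      ≤ ((m.factorial : ℝ) / Real.sqrt (2 * Real.exp 1)) * Real.sqrt (2 * Real.exp 1) :=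
    mul_le_mul_of_nonneg_right hA hsqrt2e.le
  have h10 : ((m.factorial : ℝ) / Real.sqrt (2 * Real.exp 1)) * Real.sqrt (2 * Real.exp 1)
      = (m.factorial : ℝ) := by field_simp
  rw [div_le_one hfac]
  linarith

lemma g_eq {s : ℝ} (hs : 0 < s) :
    Real.sqrt (2/Real.exp 1) * s ^ (-(1/2) : ℝ) = 2 / Real.sqrt (2*Real.exp 1*s) := by
  have key : Real.sqrt (2/Real.exp 1) * Real.sqrt (2*Real.exp 1) = 2 := by
    rw [← Real.sqrt_mul (by positivity) (2*Real.exp 1),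
      show (2/Real.exp 1) * (2*Real.exp 1) = 4 by
        field_simp; ring,
      show (4:ℝ) = 2^2 by norm_num, Real.sqrt_sq (by norm_num)]
  have h1 : s ^ (-(1/2) : ℝ) = (Real.sqrt s)⁻¹ := by
    rw [Real.rpow_neg hs.le, ← Real.sqrt_eq_rpow]
  have h2 : (0:ℝ) < Real.sqrt (2*Real.exp 1) := Real.sqrt_pos.mpr (by positivity)
  have h3 : (0:ℝ) < Real.sqrt s := Real.sqrt_pos.mpr hs
  rw [h1, Real.sqrt_mul (by positivity) s, eq_div_iff (by positivity)]
  calc Real.sqrt (2/Real.exp 1) * (Real.sqrt s)⁻¹ * (Real.sqrt (2*Real.exp 1) * Real.sqrt s)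
      = (Real.sqrt (2/Real.exp 1) * Real.sqrt (2*Real.exp 1)) * ((Real.sqrt s)⁻¹ * Real.sqrt s) := by
        ring
    _ = 2 := by rw [inv_mul_cancel₀ h3.ne', key, mul_one]

lemma continuous_p (k : ℕ) : Continuous fun s : ℝ => p s k := by
  unfold p
  continuity

lemma continuous_d (k : ℕ) : Continuous fun s : ℝ => d s k := by
  cases k with
  | zero => exact (continuous_p 0).neg
  | succ j => exact (continuous_p j).sub (continuous_p (j+1))

end AL

open AL

/-- Adell–Lekuona bound: for `t ≥ 0`, `x ≥ 0`,
`TV(Poisson(t), Poisson(t+x)) ≤ min(1 − e^{-x}, √(2/e)(√(t+x) − √t))`. -/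
theorem stmt_17 (t x : ℝ) (ht : 0 ≤ t) (hx : 0 ≤ x) :
    (1 / 2) * ∑' k : ℕ,
        |Real.exp (-t) * t ^ k / (k.factorial : ℝ)
          - Real.exp (-(t + x)) * (t + x) ^ k / (k.factorial : ℝ)|
      ≤ min (1 - Real.exp (-x))
          (Real.sqrt (2 / Real.exp 1) * (Real.sqrt (t + x) - Real.sqrt t)) := by
  have htx : (0:ℝ) ≤ t + x := by linarith
  have hP := hasSum_p ht
  have hQ := hasSum_p htx
  have hPs : Summable (p t) := hP.summable
  have hQs : Summable (p (t+x)) := hQ.summable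
  have hgoal_eq : (∑' k : ℕ, |Real.exp (-t) * t ^ k / (k.factorial : ℝ)
          - Real.exp (-(t + x)) * (t + x) ^ k / (k.factorial : ℝ)|)
      = ∑' k : ℕ, |p t k - p (t+x) k| := rfl
  rw [hgoal_eq]
  have hminS : Summable (fun k => min (p t k) (p (t+x) k)) :=
    Summable.of_nonneg_of_le (fun k => le_min (p_nonneg ht k) (p_nonneg htx k))
      (fun k => min_le_left _ _) hPs
  have habs_eq : ∀ k, |p t k - p (t+x) k|
      = p t k + p (t+x) k - 2 * min (p t k) (p (t+x) k) := by
    intro k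
    rcases le_total (p t k) (p (t+x) k) with h | h
    · rw [min_eq_left h, abs_of_nonpos (by linarith)]; ring
    · rw [min_eq_right h, abs_of_nonneg (by linarith)]; ring
  have htsum : ∑' k : ℕ, |p t k - p (t+x) k|
      = 2 - 2 * ∑' k, min (p t k) (p (t+x) k) := by
    rw [tsum_congr habs_eq, Summable.tsum_sub (hPs.add hQs) (hminS.mul_left 2), Summable.tsum_add hPs hQs,
      hP.tsum_eq, hQ.tsum_eq, tsum_mul_left]
    ring
  -- first bound
  have hmin_ge : ∀ k, Real.exp (-x) * p t k ≤ min (p t k) (p (t+x) k) := by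
    intro k
    have hPk := p_nonneg ht k
    have hex : Real.exp (-x) ≤ 1 := Real.exp_le_one_iff.mpr (by linarith)
    apply le_min
    · nlinarith [Real.exp_pos (-x)]
    · have hthis : Real.exp (-x) * p t k
          = Real.exp (-t) * Real.exp (-x) * t^k / (k.factorial : ℝ) := by
        unfold p; ring
      have hsplit : p (t+x) k
          = Real.exp (-t) * Real.exp (-x) * (t+x)^k / (k.factorial : ℝ) := by
        unfold p
        rw [show -(t+x) = -t + -x by ring, Real.exp_add]
      rw [hthis, hsplit]
      gcongr
      linarith
  have hmin_tsum : Real.exp (-x) ≤ ∑' k, min (p t k) (p (t+x) k) := by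
    have h1 : ∑' k, Real.exp (-x) * p t k = Real.exp (-x) := by
      rw [tsum_mul_left, hP.tsum_eq, mul_one]
    rw [← h1]
    exact Summable.tsum_le_tsum hmin_ge (hPs.mul_left _) hminS
  have bound1 : (1/2) * ∑' k : ℕ, |p t k - p (t+x) k| ≤ 1 - Real.exp (-x) := by
    rw [htsum]; linarith
  -- second bound
  have hab : t ≤ t + x := by linarith
  have hI : ∀ k : ℕ, IntervalIntegrable (fun s => |d s k|) MeasureTheory.volume t (t+x) :=
    fun k => ((continuous_d k).abs).intervalIntegrable _ _
  have hC : ∀ n : ℕ, ∑ k ∈ Finset.range n, |p t k - p (t+x) k|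
      ≤ Real.sqrt (2/Real.exp 1) * (2*(Real.sqrt (t+x) - Real.sqrt t)) := by
    intro n
    have step_k : ∀ k : ℕ, |p t k - p (t+x) k| ≤ ∫ s in t..(t+x), |d s k| := by
      intro k
      have hftc : ∫ s in t..(t+x), d s k = p (t+x) k - p t k :=
        intervalIntegral.integral_eq_sub_of_hasDerivAt (fun s _ => hasDerivAt_p s k)
          ((continuous_d k).intervalIntegrable _ _)
      rw [abs_sub_comm, ← hftc]
      exact intervalIntegral.abs_integral_le_integral_abs hab
    calc ∑ k ∈ Finset.range n, |p t k - p (t+x) k|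
        ≤ ∑ k ∈ Finset.range n, ∫ s in t..(t+x), |d s k| :=
          Finset.sum_le_sum (fun k _ => step_k k)
      _ = ∫ s in t..(t+x), ∑ k ∈ Finset.range n, |d s k| :=
          (intervalIntegral.integral_finset_sum (fun k _ => hI k)).symm
      _ ≤ ∫ s in t..(t+x), Real.sqrt (2/Real.exp 1) * s ^ (-(1/2) : ℝ) := by
          apply intervalIntegral.integral_mono_ae_restrict hab
            ((continuous_finset_sum _ (fun k _ => (continuous_d k).abs)).intervalIntegrable _ _)
            ((intervalIntegral.intervalIntegrable_rpow' (by norm_num)).const_mul _)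
          have h0 : ∀ᵐ (s : ℝ), s ≠ (0:ℝ) := by
            rw [MeasureTheory.ae_iff]
            have he : {s : ℝ | ¬ s ≠ 0} = {(0:ℝ)} := by ext s; simp
            rw [he]
            exact MeasureTheory.measure_singleton 0
          have h0' : ∀ᵐ s ∂(MeasureTheory.volume.restrict (Set.Icc t (t+x))), s ≠ (0:ℝ) :=
            h0.filter_mono (MeasureTheory.ae_mono MeasureTheory.Measure.restrict_le_self)
          filter_upwards [MeasureTheory.ae_restrict_mem measurableSet_Icc, h0'] with s hs hs0
          have hspos : (0:ℝ) < s := lt_of_le_of_ne (le_trans ht hs.1) (Ne.symm hs0)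
          have hb1 := sum_abs_d_le hspos n
          have hb2 := mode_bound hspos
          rw [g_eq hspos]
          have hsq : (0:ℝ) < Real.sqrt (2*Real.exp 1*s) := Real.sqrt_pos.mpr (by positivity)
          calc ∑ k ∈ Finset.range n, |d s k| ≤ 2 * p s (Nat.floor s) := hb1
            _ ≤ 2 * (1 / Real.sqrt (2*Real.exp 1*s)) := by linarith
            _ = 2 / Real.sqrt (2*Real.exp 1*s) := by ring
      _ = Real.sqrt (2/Real.exp 1) * (2*(Real.sqrt (t+x) - Real.sqrt t)) := by
          rw [intervalIntegral.integral_const_mul,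
            integral_rpow (Or.inl (by norm_num : (-1:ℝ) < -(1/2))),
            show (-(1/2) + 1 : ℝ) = 1/2 by norm_num,
            ← Real.sqrt_eq_rpow, ← Real.sqrt_eq_rpow]
          ring
  have bound2 : (1/2) * ∑' k : ℕ, |p t k - p (t+x) k|
      ≤ Real.sqrt (2 / Real.exp 1) * (Real.sqrt (t + x) - Real.sqrt t) := by
    have h := Real.tsum_le_of_sum_range_le (fun k => abs_nonneg _) hC
    linarith
  exact le_min bound1 bound2
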